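/- Let F be an ε-Følner set in the Schreier graph of X₁ = H₁\Γ with respect to a finite symmetric generating set S, and let f₂ ∈ L²(X₂, ν₂) be nonnegative with ⟨(I − M)f₂, f₂⟩ ≤ (1 − λ + ε)‖f₂‖² for a p.m.p. action Γ ↷ (X₂, ν₂). Then f = 𝟙_F ⊗ f₂ ∈ L²(X₁ × X₂, ν₁ × ν₂) satisfies ⟨(I − M)f, f⟩ ≤ (1 − λ + ε + |S|ε)‖f‖², where M is the averaging operator of the diagonal action. -/

import Mathlib

open MeasureTheory
open scoped Pointwise

section Aux

open Classical in
lemma aux_single_eq {α X : Type*} [MeasurableSpace α] [MeasurableSpace X]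
    (a : α) (h : X → ℝ) :
    (fun p : α × X => if p.1 = a then h p.2 else 0)
      = ({a} ×ˢ (Set.univ : Set X)).indicator (fun p => h p.2) := by
  funext p
  have hiff : p ∈ ({a} ×ˢ (Set.univ : Set X)) ↔ p.1 = a := by
    simp only [Set.mem_prod, Set.mem_singleton_iff, Set.mem_univ, and_true]
  by_cases hp : p.1 = a
  · rw [if_pos hp, Set.indicator_of_mem (hiff.mpr hp)]
  · rw [if_neg hp, Set.indicator_of_notMem (fun hmem => hp (hiff.mp hmem))]

open Classical in
lemma aux_restrict {α X : Type*} [MeasurableSpace α] [MeasurableSingletonClass α]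
    [MeasurableSpace X] (ν : Measure X) [SFinite ν] (a : α)
    (hsf : SFinite (Measure.count : Measure α)) :
    (Measure.count.prod ν).restrict ({a} ×ˢ (Set.univ : Set X)) = ν.map (Prod.mk a) := by
  rw [← Measure.prod_restrict, Measure.restrict_univ, Measure.restrict_singleton,
    Measure.count_singleton, one_smul, Measure.dirac_prod]

open Classical in
lemma aux_integrable_single {α X : Type*} [MeasurableSpace α] [MeasurableSingletonClass α]
    [MeasurableSpace X] (ν : Measure X) [SFinite ν]
    (hsf : SFinite (Measure.count : Measure α)) (a : α)
    {h : X → ℝ} (hm : Measurable h) (hint : Integrable h ν) :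
    Integrable (fun p : α × X => if p.1 = a then h p.2 else 0) (Measure.count.prod ν) := by
  rw [aux_single_eq,
    integrable_indicator_iff ((measurableSet_singleton a).prod MeasurableSet.univ)]
  rw [IntegrableOn, aux_restrict ν a hsf]
  show Integrable (h ∘ Prod.snd) _
  rw [integrable_map_measure (hm.comp measurable_snd).aestronglyMeasurable
      measurable_prodMk_left.aemeasurable]
  exact hint

open Classical in
lemma aux_integral_single {α X : Type*} [MeasurableSpace α] [MeasurableSingletonClass α]
    [MeasurableSpace X] (ν : Measure X) [SFinite ν]
    (hsf : SFinite (Measure.count : Measure α)) (a : α)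
    {h : X → ℝ} (hm : Measurable h) :
    ∫ p, (if p.1 = a then h p.2 else 0) ∂(Measure.count.prod ν) = ∫ x, h x ∂ν := by
  rw [aux_single_eq,
    integral_indicator ((measurableSet_singleton a).prod MeasurableSet.univ)]
  rw [show ∫ p in ({a} ×ˢ (Set.univ : Set X)), h p.2 ∂(Measure.count.prod ν)
      = ∫ p, h p.2 ∂((Measure.count.prod ν).restrict ({a} ×ˢ (Set.univ : Set X))) from rfl,
    aux_restrict ν a hsf]
  show ∫ p, (h ∘ Prod.snd) p ∂(ν.map (Prod.mk a)) = _
  rw [integral_map measurable_prodMk_left.aemeasurable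
      (hm.comp measurable_snd).aestronglyMeasurable]
  rfl

open Classical in
lemma aux_weighted_repr {α X : Type*} (F : Finset α) (w : α → ℝ) (h : X → ℝ) (p : α × X) :
    (F : Set α).indicator w p.1 * h p.2
      = ∑ a ∈ F, if p.1 = a then w a * h p.2 else 0 := by
  rw [Finset.sum_ite_eq F p.1 (fun a => w a * h p.2)]
  by_cases hp : p.1 ∈ F <;> simp [hp, Set.indicator_apply]

open Classical in
lemma aux_integrable_weighted {α X : Type*} [MeasurableSpace α] [MeasurableSingletonClass α]
    [MeasurableSpace X] (ν : Measure X) [SFinite ν]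
    (hsf : SFinite (Measure.count : Measure α)) (F : Finset α) (w : α → ℝ)
    {h : X → ℝ} (hm : Measurable h) (hint : Integrable h ν) :
    Integrable (fun p : α × X => (F : Set α).indicator w p.1 * h p.2)
      (Measure.count.prod ν) := by
  have hrepr : (fun p : α × X => (F : Set α).indicator w p.1 * h p.2)
      = fun p => ∑ a ∈ F, if p.1 = a then (fun x => w a * h x) p.2 else 0 := by
    funext p; exact aux_weighted_repr F w h p
  rw [hrepr]
  exact integrable_finset_sum _ (fun a _ => aux_integrable_single ν hsf a
    (hm.const_mul (w a)) (hint.const_mul (w a)))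

open Classical in
lemma aux_integral_weighted {α X : Type*} [MeasurableSpace α] [MeasurableSingletonClass α]
    [MeasurableSpace X] (ν : Measure X) [SFinite ν]
    (hsf : SFinite (Measure.count : Measure α)) (F : Finset α) (w : α → ℝ)
    {h : X → ℝ} (hm : Measurable h) (hint : Integrable h ν) :
    ∫ p, (F : Set α).indicator w p.1 * h p.2 ∂(Measure.count.prod ν)
      = (∑ a ∈ F, w a) * ∫ x, h x ∂ν := by
  have hrepr : (fun p : α × X => (F : Set α).indicator w p.1 * h p.2)
      = fun p => ∑ a ∈ F, if p.1 = a then (fun x => w a * h x) p.2 else 0 := by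
    funext p; exact aux_weighted_repr F w h p
  rw [hrepr, integral_finset_sum _ (fun a _ => aux_integrable_single ν hsf a
    (hm.const_mul (w a)) (hint.const_mul (w a))), Finset.sum_mul]
  refine Finset.sum_congr rfl fun a _ => ?_
  rw [aux_integral_single ν hsf a (hm.const_mul (w a)), MeasureTheory.integral_const_mul]

end Aux

open Classical in
/-- If `F` is an `ε`-Følner set in the Schreier graph of `X₁ = Γ/H₁`
(with counting measure) and `f₂ ∈ L²(X₂, ν₂)` is nonnegative with
`⟨(I-M)f₂, f₂⟩ ≤ (1-λ+ε)‖f₂‖²` for a p.m.p. action on `(X₂, ν₂)`, then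
`f = 𝟙_F ⊗ f₂` satisfies `⟨(I-M)f, f⟩ ≤ (1-λ+ε+|S|ε)‖f‖²` for the diagonal action on
the product measure space. -/
theorem product_test_function_estimate
    {Γ X₂ : Type*} [Group Γ] [Countable Γ] (H₁ : Subgroup Γ)
    [MeasurableSpace X₂] [MulAction Γ X₂]
    (ν₂ : Measure X₂) [IsProbabilityMeasure ν₂]
    (hmp : ∀ γ : Γ, MeasurePreserving (fun x : X₂ => γ • x) ν₂ ν₂)
    (S : Finset Γ) (hSne : S.Nonempty) (hSsym : ∀ s ∈ S, s⁻¹ ∈ S)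
    (hgen : Subgroup.closure (S : Set Γ) = ⊤)
    (ε lam : ℝ) (hε : 0 < ε)
    (F : Finset (Γ ⧸ H₁)) (hFne : F.Nonempty)
    (hF : ((((S : Set Γ) • (F : Set (Γ ⧸ H₁))) \ (F : Set (Γ ⧸ H₁))).ncard : ℝ)
        ≤ ε * F.card)
    (f₂ : X₂ → ℝ) (hf₂m : Measurable f₂) (hf₂2 : MemLp f₂ 2 ν₂) (hf₂pos : 0 ≤ f₂)
    (hf₂ : ∫ x, f₂ x * (f₂ x - (S.card : ℝ)⁻¹ * ∑ s ∈ S, f₂ (s • x)) ∂ν₂ ≤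
      (1 - lam + ε) * ∫ x, (f₂ x) ^ 2 ∂ν₂) :
    letI : MeasurableSpace (Γ ⧸ H₁) := ⊤
    let f : (Γ ⧸ H₁) × X₂ → ℝ := fun p => (if p.1 ∈ F then (1 : ℝ) else 0) * f₂ p.2
    ∫ p, f p * (f p - (S.card : ℝ)⁻¹ * ∑ s ∈ S, f (s • p))
        ∂(Measure.count.prod ν₂) ≤
      (1 - lam + ε + S.card * ε) * ∫ p, (f p) ^ 2 ∂(Measure.count.prod ν₂) := by

  letI : MeasurableSpace (Γ ⧸ H₁) := ⊤
  haveI hsc : MeasurableSingletonClass (Γ ⧸ H₁) := ⟨fun _ => trivial⟩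
  haveI : Countable (Γ ⧸ H₁) := Quotient.countable
  have hsf : SFinite (Measure.count : Measure (Γ ⧸ H₁)) := by
    unfold Measure.count; infer_instance
  intro f
  have hfdef : f = fun p : (Γ ⧸ H₁) × X₂ => (if p.1 ∈ F then (1 : ℝ) else 0) * f₂ p.2 := rfl
  set c : ℝ := (S.card : ℝ)⁻¹ with hcdef
  have hScard : (0 : ℝ) < S.card := by exact_mod_cast Finset.card_pos.mpr hSne
  have hc0 : 0 ≤ c := by positivity
  set A := ∫ x, f₂ x ^ 2 ∂ν₂ with hAdef
  have hA0 : 0 ≤ A := integral_nonneg fun x => sq_nonneg _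
  have hsmeas : ∀ s : Γ, Measurable (fun x : X₂ => f₂ (s • x)) :=
    fun s => hf₂m.comp (hmp s).measurable
  have hs2 : ∀ s : Γ, MemLp (fun x => f₂ (s • x)) 2 ν₂ :=
    fun s => hf₂2.comp_measurePreserving (hmp s)
  have hBint : ∀ s : Γ, Integrable (fun x => f₂ x * f₂ (s • x)) ν₂ := by
    intro s
    have hb : Integrable (fun x => (f₂ x ^ 2 + f₂ (s • x) ^ 2) / 2) ν₂ :=
      (hf₂2.integrable_sq.add (hs2 s).integrable_sq).div_const 2
    refine hb.mono' (hf₂m.mul (hsmeas s)).aestronglyMeasurable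
      (Filter.Eventually.of_forall fun x => ?_)
    have h1 : 0 ≤ f₂ x := hf₂pos x
    have h2 : 0 ≤ f₂ (s • x) := hf₂pos _
    rw [Real.norm_eq_abs, abs_of_nonneg (mul_nonneg h1 h2)]
    nlinarith [sq_nonneg (f₂ x - f₂ (s • x))]
  set B : Γ → ℝ := fun s => ∫ x, f₂ x * f₂ (s • x) ∂ν₂ with hBdef
  have hBnn : ∀ s, 0 ≤ B s := fun s => integral_nonneg fun x => mul_nonneg (hf₂pos x) (hf₂pos _)
  have hsqcomp : ∀ s : Γ, ∫ x, f₂ (s • x) ^ 2 ∂ν₂ = A := by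
    intro s
    have h := integral_map (μ := ν₂) ((hmp s).measurable.aemeasurable)
        (f := fun y => f₂ y ^ 2) (hf₂m.pow_const 2).aestronglyMeasurable
    rw [(hmp s).map_eq] at h
    exact h.symm
  have hBA : ∀ s, B s ≤ A := by
    intro s
    have hmono : B s ≤ ∫ x, (f₂ x ^ 2 + f₂ (s • x) ^ 2) / 2 ∂ν₂ :=
      integral_mono (hBint s)
        ((hf₂2.integrable_sq.add (hs2 s).integrable_sq).div_const 2)
        (fun x => by nlinarith [sq_nonneg (f₂ x - f₂ (s • x))])
    rw [integral_div, integral_add hf₂2.integrable_sq (hs2 s).integrable_sq, hsqcomp s] at hmono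
    linarith
  have hf₂' : A - c * ∑ s ∈ S, B s ≤ (1 - lam + ε) * A := by
    have heq : ∫ x, f₂ x * (f₂ x - c * ∑ s ∈ S, f₂ (s • x)) ∂ν₂
        = A - c * ∑ s ∈ S, B s := by
      have hint1 : Integrable (fun x => c * ∑ s ∈ S, (f₂ x * f₂ (s • x))) ν₂ :=
        (integrable_finset_sum S (fun s _ => hBint s)).const_mul c
      have hpt : (fun x => f₂ x * (f₂ x - c * ∑ s ∈ S, f₂ (s • x)))
          = fun x => f₂ x ^ 2 - c * ∑ s ∈ S, (f₂ x * f₂ (s • x)) := by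
        funext x; rw [← Finset.mul_sum]; ring
      rw [hpt, integral_sub hf₂2.integrable_sq hint1, MeasureTheory.integral_const_mul,
        integral_finset_sum S (fun s _ => hBint s)]
    rw [heq] at hf₂
    exact hf₂
  set Q := c * ∑ s ∈ S, B s with hQdef
  have hQnn : 0 ≤ Q := mul_nonneg hc0 (Finset.sum_nonneg fun s _ => hBnn s)
  have hQA : Q ≤ A := by
    have h1 : ∑ s ∈ S, B s ≤ ∑ s ∈ S, A := Finset.sum_le_sum fun s _ => hBA s
    rw [Finset.sum_const, nsmul_eq_mul] at h1
    have h2 : Q ≤ c * ((S.card : ℝ) * A) := mul_le_mul_of_nonneg_left h1 hc0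
    rw [← mul_assoc, hcdef, inv_mul_cancel₀ (ne_of_gt hScard), one_mul] at h2
    exact h2
  -- combinatorics
  set intF : Finset (Γ ⧸ H₁) := F.filter (fun a => ∀ s ∈ S, s • a ∈ F) with hintFdef
  set D : Finset (Γ ⧸ H₁) := (S • F) \ F with hDdef
  have hDcoe : (D : Set (Γ ⧸ H₁)) = ((S : Set Γ) • (F : Set (Γ ⧸ H₁))) \ (F : Set (Γ ⧸ H₁)) := by
    rw [hDdef, Finset.coe_sdiff, Finset.coe_smul]
  have hDcard : (D.card : ℝ) ≤ ε * F.card := by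
    have h1 : (D.card : ℝ) = ((((S : Set Γ) • (F : Set (Γ ⧸ H₁))) \ (F : Set (Γ ⧸ H₁))).ncard : ℝ) := by
      rw [← hDcoe, Set.ncard_coe_finset]
    rw [h1]; exact hF
  have hsub : F \ intF ⊆ S.biUnion (fun s => s⁻¹ • D) := by
    intro a ha
    rw [Finset.mem_sdiff] at ha
    obtain ⟨haF, hanot⟩ := ha
    rw [hintFdef, Finset.mem_filter] at hanot
    push_neg at hanot
    obtain ⟨s, hsS, hsa⟩ := hanot haF
    refine Finset.mem_biUnion.mpr ⟨s, hsS, ?_⟩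
    rw [Finset.mem_inv_smul_finset_iff, hDdef, Finset.mem_sdiff]
    exact ⟨Finset.smul_mem_smul hsS haF, hsa⟩
  have hintsub : intF ⊆ F := Finset.filter_subset _ _
  have hmF : (F.card : ℝ) - intF.card ≤ S.card * (ε * F.card) := by
    have h2 : (F \ intF).card ≤ ∑ s ∈ S, (s⁻¹ • D).card :=
      le_trans (Finset.card_le_card hsub) Finset.card_biUnion_le
    simp only [Finset.card_smul_finset, Finset.sum_const, smul_eq_mul] at h2
    have h3 : ((F \ intF).card : ℝ) = (F.card : ℝ) - intF.card := by
      rw [Finset.card_sdiff_of_subset hintsub, Nat.cast_sub (Finset.card_le_card hintsub)]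
    have h4 : ((F \ intF).card : ℝ) ≤ (S.card : ℝ) * D.card := by exact_mod_cast h2
    have h5 : (S.card : ℝ) * D.card ≤ S.card * (ε * F.card) :=
      mul_le_mul_of_nonneg_left hDcard (by positivity)
    linarith
  set n : Γ → ℕ := fun s => (F.filter (fun a => s • a ∈ F)).card with hndef
  have hnge : ∀ s ∈ S, intF.card ≤ n s := by
    intro s hs
    apply Finset.card_le_card
    intro a ha
    rw [hintFdef, Finset.mem_filter] at ha
    rw [Finset.mem_filter]
    exact ⟨ha.1, ha.2 s hs⟩
  -- product integrals
  have hG0 : ∫ p, f p ^ 2 ∂(Measure.count.prod ν₂) = F.card * A := by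
    have hPt : (fun p : (Γ ⧸ H₁) × X₂ => f p ^ 2)
        = fun p => (F : Set (Γ ⧸ H₁)).indicator (fun _ => (1 : ℝ)) p.1 * (f₂ p.2 ^ 2) := by
      funext p
      simp only [hfdef]
      by_cases hp : p.1 ∈ F <;> simp [hp, Set.indicator_apply] <;> ring
    rw [hPt, aux_integral_weighted ν₂ hsf F (fun _ => (1:ℝ)) (h := fun x => f₂ x ^ 2) (hf₂m.pow_const 2) hf₂2.integrable_sq]
    simp [Finset.sum_const, ← hAdef]
  have hIsq : Integrable (fun p => f p ^ 2) (Measure.count.prod ν₂) := by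
    have hPt : (fun p : (Γ ⧸ H₁) × X₂ => f p ^ 2)
        = fun p => (F : Set (Γ ⧸ H₁)).indicator (fun _ => (1 : ℝ)) p.1 * (f₂ p.2 ^ 2) := by
      funext p
      simp only [hfdef]
      by_cases hp : p.1 ∈ F <;> simp [hp, Set.indicator_apply] <;> ring
    rw [hPt]
    exact aux_integrable_weighted ν₂ hsf F (fun _ => (1:ℝ)) (h := fun x => f₂ x ^ 2) (hf₂m.pow_const 2) hf₂2.integrable_sq
  have hPts : ∀ s : Γ, (fun p : (Γ ⧸ H₁) × X₂ => f p * f (s • p))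
      = fun p => (F : Set (Γ ⧸ H₁)).indicator (fun a => if s • a ∈ F then (1 : ℝ) else 0) p.1
          * (f₂ p.2 * f₂ (s • p.2)) := by
    intro s
    funext p
    simp only [hfdef, Prod.smul_fst, Prod.smul_snd]
    by_cases hp : p.1 ∈ F <;> by_cases hq : s • p.1 ∈ F <;>
      simp [hp, hq, Set.indicator_apply] <;> ring
  have hIfs : ∀ s : Γ, Integrable (fun p => f p * f (s • p)) (Measure.count.prod ν₂) := by
    intro s
    rw [hPts s]
    exact aux_integrable_weighted ν₂ hsf F (fun a => if s • a ∈ F then (1:ℝ) else 0) (h := fun x => f₂ x * f₂ (s • x)) (hf₂m.mul (hsmeas s)) (hBint s)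
  have hGs : ∀ s : Γ, ∫ p, f p * f (s • p) ∂(Measure.count.prod ν₂) = (n s : ℝ) * B s := by
    intro s
    rw [hPts s, aux_integral_weighted ν₂ hsf F (fun a => if s • a ∈ F then (1:ℝ) else 0) (h := fun x => f₂ x * f₂ (s • x)) (hf₂m.mul (hsmeas s)) (hBint s)]
    congr 1
    rw [hndef]
    simp [Finset.sum_boole]
  have hLHS : ∫ p, f p * (f p - c * ∑ s ∈ S, f (s • p)) ∂(Measure.count.prod ν₂)
      = (F.card : ℝ) * A - c * ∑ s ∈ S, (n s : ℝ) * B s := by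
    have hpt : (fun p => f p * (f p - c * ∑ s ∈ S, f (s • p)))
        = fun p => f p ^ 2 - c * ∑ s ∈ S, (f p * f (s • p)) := by
      funext p; rw [← Finset.mul_sum]; ring
    rw [hpt, integral_sub hIsq ((integrable_finset_sum S (fun s _ => hIfs s)).const_mul c),
      MeasureTheory.integral_const_mul, integral_finset_sum S (fun s _ => hIfs s), hG0]
    congr 2
    exact Finset.sum_congr rfl fun s _ => hGs s
  rw [hLHS, hG0]
  -- final arithmetic
  have hsum : (intF.card : ℝ) * ∑ s ∈ S, B s ≤ ∑ s ∈ S, (n s : ℝ) * B s := by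
    rw [Finset.mul_sum]
    exact Finset.sum_le_sum fun s hs =>
      mul_le_mul_of_nonneg_right (by exact_mod_cast hnge s hs) (hBnn s)
  have h1 : (intF.card : ℝ) * Q ≤ c * ∑ s ∈ S, (n s : ℝ) * B s := by
    rw [hQdef, ← mul_assoc, mul_comm (intF.card : ℝ) c, mul_assoc]
    exact mul_le_mul_of_nonneg_left hsum hc0
  have e1 : (F.card : ℝ) * (A - Q) ≤ (F.card : ℝ) * ((1 - lam + ε) * A) :=
    mul_le_mul_of_nonneg_left hf₂' (Nat.cast_nonneg _)
  have e2 : ((F.card : ℝ) - intF.card) * Q ≤ (S.card * (ε * F.card)) * A := by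
    have hge : (0 : ℝ) ≤ (F.card : ℝ) - intF.card := by
      have := Finset.card_le_card hintsub
      have : (intF.card : ℝ) ≤ F.card := by exact_mod_cast this
      linarith
    calc ((F.card : ℝ) - intF.card) * Q ≤ ((F.card : ℝ) - intF.card) * A :=
          mul_le_mul_of_nonneg_left hQA hge
      _ ≤ (S.card * (ε * F.card)) * A := mul_le_mul_of_nonneg_right hmF hA0
  have hring : (1 - lam + ε + (S.card : ℝ) * ε) * ((F.card : ℝ) * A)
      = (F.card : ℝ) * ((1 - lam + ε) * A) + ((S.card : ℝ) * (ε * F.card)) * A := by ring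
  have hring2 : (F.card : ℝ) * A - (intF.card : ℝ) * Q
      = (F.card : ℝ) * (A - Q) + ((F.card : ℝ) - intF.card) * Q := by ring
  linarith
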